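/- arXiv:1012.0596 — 2 statements merged into one kernel-verified Lean document; each statement's English description precedes it below -/
import Mathlib

section
/- If a set X ⊆ T^{[n]} is regular, then the tree R_X it generates (its downward closure under restrictions) is also regular. -/
noncomputable section

namespace Basis5

/-- The first uncountable ordinal. -/
def omega1 : Ordinal.{0} := (Cardinal.aleph 1).ord

/-- A node of the binary tree `2^{<ω₁}`: a function defined (i.e. `some`-valued)
exactly on a countable ordinal. -/
def IsNodeFun (f : Ordinal.{0} → Option Bool) : Prop :=
  ∃ a, a < omega1 ∧ ∀ ξ, (f ξ).isSome ↔ ξ < a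

def BNode := {f : Ordinal → Option Bool // IsNodeFun f}

/-- The height (domain) of a node. -/
def ht (t : BNode) : Ordinal := sInf {a | ∀ ξ, (t.1 ξ).isSome ↔ ξ < a}

/-- Restriction of a node to (at most) height `α`. -/
def restrict (t : BNode) (α : Ordinal) : BNode :=
  ⟨fun ξ => if ξ < α then t.1 ξ else none, by
    obtain ⟨a, ha, hfa⟩ := t.2
    refine ⟨min α a, lt_of_le_of_lt (min_le_right _ _) ha, fun ξ => ?_⟩
    by_cases h : ξ < α
    · simp [h, hfa ξ, lt_min_iff]
    · simp [h, lt_min_iff]⟩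

/-- `s` is an initial segment of `t` (the tree order of `2^{<ω₁}`). -/
def extends' (s t : BNode) : Prop := restrict t (ht s) = s

/-- `s` and `t` are incomparable in the tree order. -/
def Incomp (s t : BNode) : Prop := ¬ extends' s t ∧ ¬ extends' t s

/-- `D(s,t)`, the set of coordinates where `s` and `t` differ. -/
def diffSet (s t : BNode) : Set Ordinal := {ξ | s.1 ξ ≠ t.1 ξ}

/-- `Δ(s,t) = min D(s,t)`. -/
def delta (s t : BNode) : Ordinal := sInf (diffSet s t)

/-- The meet `s ∧ t = s ↾ Δ(s,t)`. -/
def meet (s t : BNode) : BNode := restrict s (delta s t)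

/-- Lexicographic (non-strict) order on nodes of the same height. -/
def lexLE (s t : BNode) : Prop := s = t ∨ t.1 (delta s t) = some true

/-- `∧(X)`: the set of pairwise meets of incomparable elements of `X`. -/
def wedgeSet (X : Set BNode) : Set BNode :=
  {w | ∃ s ∈ X, ∃ t ∈ X, Incomp s t ∧ w = meet s t}

def DownClosed (A : Set BNode) : Prop := ∀ t ∈ A, ∀ α, restrict t α ∈ A

def IsAntichainN (X : Set BNode) : Prop := ∀ s ∈ X, ∀ t ∈ X, s ≠ t → Incomp s t

/-- An Aronszajn tree: uncountable, downward closed, countable levels and chains. -/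
def IsAronszajn (T : Set BNode) : Prop :=
  DownClosed T ∧ ¬ T.Countable ∧ (∀ α, {t : BNode | t ∈ T ∧ ht t = α}.Countable) ∧
    ∀ c : Set BNode, c ⊆ T → (∀ s ∈ c, ∀ t ∈ c, extends' s t ∨ extends' t s) → c.Countable

/-- A subtree: an uncountable downward closed subset. -/
def IsSubtree (T A : Set BNode) : Prop := A ⊆ T ∧ DownClosed A ∧ ¬ A.Countable

def Coherent (T : Set BNode) : Prop :=
  ∀ s ∈ T, ∀ t ∈ T, ht s = ht t → (diffSet s t).Finite

def IsSpecial (T : Set BNode) : Prop :=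
  ∃ f : BNode → ℕ, ∀ s ∈ T, ∀ t ∈ T, extends' s t → s ≠ t → f s ≠ f t

def FinModClosed (T : Set BNode) : Prop :=
  ∀ t ∈ T, ∀ s : BNode, ht s = ht t → (diffSet s t).Finite → s ∈ T

/-- Club subsets of `ω₁`. -/
def IsClubBelow (C : Set Ordinal) : Prop :=
  C ⊆ Set.Iio omega1 ∧ (∀ a < omega1, ∃ b ∈ C, a < b) ∧
    ∀ a < omega1, (C ∩ Set.Iio a).Nonempty → sSup (C ∩ Set.Iio a) = a → a ∈ C

/-- Stationary subsets of `ω₁`. -/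
def IsStationary (S : Set Ordinal) : Prop :=
  S ⊆ Set.Iio omega1 ∧ ∀ C, IsClubBelow C → (S ∩ C).Nonempty

/-- `a` is a limit point of `C`. -/
def IsLimitOf (C : Set Ordinal) (a : Ordinal) : Prop :=
  (C ∩ Set.Iio a).Nonempty ∧ sSup (C ∩ Set.Iio a) = a

/-- Membership in `T^{[n]}`: an `≤_lex`-nondecreasing `n`-tuple from a single level of `T`. -/
def IsTup (T : Set BNode) (n : ℕ) (σ : Fin n → BNode) : Prop :=
  (∀ i, σ i ∈ T) ∧ (∀ i j, ht (σ i) = ht (σ j)) ∧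
    ∀ i j : Fin n, i ≤ j → lexLE (σ i) (σ j)

/-- Coordinatewise restriction of a tuple. -/
def tres {n : ℕ} (σ : Fin n → BNode) (α : Ordinal) : Fin n → BNode :=
  fun i => restrict (σ i) α

def tExt {n : ℕ} (σ τ : Fin n → BNode) : Prop := ∀ i, extends' (σ i) (τ i)

def tIncomp {n : ℕ} (σ τ : Fin n → BNode) : Prop := ¬ tExt σ τ ∧ ¬ tExt τ σ

def tdiff {n : ℕ} (σ τ : Fin n → BNode) : Set Ordinal :=
  {ξ | ∃ i, (σ i).1 ξ ≠ (τ i).1 ξ}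

/-- `Δ(σ,τ)` for tuples: least level where some coordinate differs. -/
def tdelta {n : ℕ} (σ τ : Fin n → BNode) : Ordinal := sInf (tdiff σ τ)

def tmeet {n : ℕ} (σ τ : Fin n → BNode) : Fin n → BNode := tres σ (tdelta σ τ)

def twedge {n : ℕ} (X : Set (Fin n → BNode)) : Set (Fin n → BNode) :=
  {w | ∃ σ ∈ X, ∃ τ ∈ X, tIncomp σ τ ∧ w = tmeet σ τ}

def tAntichain {n : ℕ} (X : Set (Fin n → BNode)) : Prop :=
  ∀ σ ∈ X, ∀ τ ∈ X, σ ≠ τ → tIncomp σ τ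

/-- `σ ∈ K^{[n]} = K^n ∩ T^{[n]}`. -/
def KTup (T K : Set BNode) (n : ℕ) (σ : Fin n → BNode) : Prop :=
  IsTup T n σ ∧ ∀ i, σ i ∈ K

/-- The pair `{σ, τ}` (with `Ht σ ≤ Ht τ`) is regular:
`D(τ(i), τ(0)) ∩ Ht(σ) = D(σ(i), σ(0))` for all `i < n`. -/
def RegPair (n : ℕ) (σ τ : Fin n → BNode) : Prop :=
  ∀ (h : 0 < n) (i : Fin n),
    diffSet (τ i) (τ ⟨0, h⟩) ∩ Set.Iio (ht (σ ⟨0, h⟩)) = diffSet (σ i) (σ ⟨0, h⟩)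

/-- A set of tuples is regular if every pair of its elements is regular. -/
def RegSet {n : ℕ} (X : Set (Fin n → BNode)) : Prop :=
  ∀ σ ∈ X, ∀ τ ∈ X, (∀ i, ht (σ i) ≤ ht (τ i)) → RegPair n σ τ

/-- A subtree of `T^{[n]}`: uncountable set of tuples closed under restriction. -/
def IsTupSubtree (T : Set BNode) (n : ℕ) (R : Set (Fin n → BNode)) : Prop :=
  (∀ σ ∈ R, IsTup T n σ) ∧ (∀ σ ∈ R, ∀ α, tres σ α ∈ R) ∧ ¬ R.Countable

/-- The family `F_n` of regular subtrees of `T^{[n]}` whose meets avoid `K^{[n]}`. -/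
def Fn (T K : Set BNode) (n : ℕ) : Set (Set (Fin n → BNode)) :=
  {R | IsTupSubtree T n R ∧ RegSet R ∧ ∀ w ∈ twedge R, ¬ KTup T K n w}

/-- `F_n^⊥`: subtrees of `T^{[n]}` orthogonal to every member of `F_n`. -/
def FnPerp (T K : Set BNode) (n : ℕ) : Set (Set (Fin n → BNode)) :=
  {B | IsTupSubtree T n B ∧ ∀ A ∈ Fn T K n, (A ∩ B).Countable}

/-- `⟨N_ξ : ξ ∈ C⟩` witnesses `φ₀(F_n)`. -/
def Phi0Witness (T K : Set BNode) (n : ℕ) (C : Set Ordinal)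
    (N : Ordinal → Set (Set (Fin n → BNode))) : Prop :=
  IsClubBelow C ∧
  (∀ ξ ∈ C, (N ξ).Countable ∧ N ξ ⊆ Fn T K n ∪ FnPerp T K n) ∧
  (∀ ξ ∈ C, ∀ η ∈ C, ξ ≤ η → N ξ ⊆ N η) ∧
  (∀ ν ∈ C, IsLimitOf C ν → N ν = ⋃ ξ ∈ C ∩ Set.Iio ν, N ξ) ∧
  (∀ ν ∈ C, ∀ σ : Fin n → BNode, IsTup T n σ → (∀ i, ht (σ i) = ν) →
    (∃ ν₀ < ν, ∀ ξ ∈ C, ν₀ < ξ → ξ < ν → ∃ A ∈ Fn T K n, A ∈ N ξ ∧ tres σ ξ ∈ A) ∨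
    (∃ B ∈ FnPerp T K n, B ∈ N ν ∧ σ ∈ B))

/-- The coloring `K^{[n]}_φ`. -/
def KPhi (T K : Set BNode) (n : ℕ) (C : Set Ordinal)
    (N : Ordinal → Set (Set (Fin n → BNode))) : Set (Fin n → BNode) :=
  {σ | IsTup T n σ ∧ ∃ ν ∈ C, (∀ i, ht (σ i) = ν) ∧
    ∃ B ∈ FnPerp T K n, B ∈ N ν ∧ σ ∈ B}

/-- The coloring `L^{[n]}_φ = (T^{[n]} ↾ C) \ K^{[n]}_φ`. -/
def LPhi (T K : Set BNode) (n : ℕ) (C : Set Ordinal)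
    (N : Ordinal → Set (Set (Fin n → BNode))) : Set (Fin n → BNode) :=
  {σ | IsTup T n σ ∧ (∃ ν ∈ C, ∀ i, ht (σ i) = ν) ∧ σ ∉ KPhi T K n C N}

/-- `ρ` is the `≤_lex`-sorted merge `σ ∪ τ` of the tuples `σ` and `τ`. -/
def IsMerge {n m : ℕ} (σ : Fin n → BNode) (τ : Fin m → BNode)
    (ρ : Fin (n + m) → BNode) : Prop :=
  (∀ i j : Fin (n + m), i ≤ j → lexLE (ρ i) (ρ j)) ∧
  (↑(List.ofFn ρ) : Multiset BNode) = ↑(List.ofFn σ) + ↑(List.ofFn τ)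

/-- `σ` is a subsequence of `τ`. -/
def IsSubseq {m n : ℕ} (σ : Fin m → BNode) (τ : Fin n → BNode) : Prop :=
  ∃ ι : Fin m → Fin n, StrictMono ι ∧ σ = τ ∘ ι

/-- A level sequence `{σ_α : α ∈ S}` in `T^{[n]}`. -/
def LevelSeq (T : Set BNode) (n : ℕ) (S : Set Ordinal)
    (σ : Ordinal → Fin n → BNode) : Prop :=
  ∀ α ∈ S, IsTup T n (σ α) ∧ ∀ i, ht (σ α i) = α

/-- The level sequence `{σ_α : α ∈ S}` is regular. -/
def RegSeq {n : ℕ} (S : Set Ordinal) (σ : Ordinal → Fin n → BNode) : Prop :=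
  ∀ α ∈ S, ∀ β ∈ S, α ≤ β → RegPair n (σ α) (σ β)

/-- The tree `R_X` generated by `X` (downward closure). -/
def downClosure (X : Set BNode) : Set BNode :=
  {r | ∃ t ∈ X, ∃ ξ ≤ ht t, r = restrict t ξ}

/-- The tree generated by a set of tuples. -/
def tDownClosure {n : ℕ} (X : Set (Fin n → BNode)) : Set (Fin n → BNode) :=
  {ρ | ∃ σ ∈ X, ∃ ξ, (∀ i, ξ ≤ ht (σ i)) ∧ ρ = tres σ ξ}

end Basis5
namespace Basis5

/-- Martin's Axiom `MA_{ℵ₁}`: every nonempty ccc partial preorder admits a filter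
meeting any `ℵ₁`-many dense sets. -/
def CCCPre (P : Type 1) (le : P → P → Prop) : Prop :=
  ∀ A : Set P, (∀ p ∈ A, ∀ q ∈ A, p ≠ q → ¬ ∃ r, le r p ∧ le r q) → A.Countable

def MAaleph1 : Prop :=
  ∀ (P : Type 1) (le : P → P → Prop), (∀ p, le p p) →
    (∀ p q r, le p q → le q r → le p r) → Nonempty P → CCCPre P le →
    ∀ (ι : Type 1) (D : ι → Set P), Cardinal.mk ι ≤ Cardinal.aleph 1 →
      (∀ i, ∀ p, ∃ q ∈ D i, le q p) →
      ∃ G : Set P, G.Nonempty ∧ (∀ p ∈ G, ∀ q, le p q → q ∈ G) ∧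
        (∀ p ∈ G, ∀ q ∈ G, ∃ r ∈ G, le r p ∧ le r q) ∧ ∀ i, (G ∩ D i).Nonempty

/-- `π(X) = X`. -/
def piClosed (X : Set BNode) : Prop :=
  ∀ s ∈ X, ∀ t ∈ X, ht s ≤ ht t → restrict t (ht s) ∈ X

/-- Every level-section of `X`, enumerated in `≤_lex`-increasing order, lies in `K_φ`. -/
def SectionsInKPhi (T K : Set BNode) (C : Set Ordinal)
    (N : (k : ℕ) → Ordinal → Set (Set (Fin k → BNode))) (X : Set BNode) : Prop :=
  ∀ α : Ordinal, {x ∈ X | ht x = α}.Nonempty →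
    ∃ (k : ℕ) (ρ : Fin k → BNode), Function.Injective ρ ∧
      (∀ i j : Fin k, i ≤ j → lexLE (ρ i) (ρ j)) ∧
      Set.range ρ = {x ∈ X | ht x = α} ∧ ρ ∈ KPhi T K k C (N k)

/-- All finite same-height `≤_lex`-sorted tuples from `X` lie in `K_φ`. -/
def FinLevelSubsetsInKPhi (T K : Set BNode) (C : Set Ordinal)
    (N : (k : ℕ) → Ordinal → Set (Set (Fin k → BNode))) (X : Set BNode) : Prop :=
  ∀ (k : ℕ) (ρ : Fin k → BNode), Function.Injective ρ → (∀ i, ρ i ∈ X) →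
    (∀ i j, ht (ρ i) = ht (ρ j)) → (∀ i j : Fin k, i ≤ j → lexLE (ρ i) (ρ j)) →
    ρ ∈ KPhi T K k C (N k)

section Forcing

variable {EM : Type 1}

/-- A condition of the forcing `∂*(K)`: a pair `(X_p, 𝓜_p)`.  Here `EM` is an abstract
type of (countable elementary submodels of `H(ω₂)`), `mem` its `∈`-relation,
`δe M = M ∩ ω₁`, and `E` the club `𝓔` of such models. -/
def IsCond (T K : Set BNode) (C : Set Ordinal)
    (N : (k : ℕ) → Ordinal → Set (Set (Fin k → BNode)))
    (mem : EM → EM → Prop) (δe : EM → Ordinal) (E : Set EM)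
    (p : Set BNode × Set EM) : Prop :=
  p.1.Finite ∧ p.1 ⊆ T ∧ (∀ x ∈ p.1, ht x ∈ C) ∧ piClosed p.1 ∧
  SectionsInKPhi T K C N p.1 ∧
  p.2.Finite ∧ p.2 ⊆ E ∧
  (∀ M ∈ p.2, ∀ M' ∈ p.2, M = M' ∨ mem M M' ∨ mem M' M) ∧
  (∀ x ∈ p.1, ∃ M ∈ p.2, ht x = δe M)

/-- The order of `∂*(K)`: coordinatewise reverse inclusion. -/
def condLE (p q : Set BNode × Set EM) : Prop := q.1 ⊆ p.1 ∧ q.2 ⊆ p.2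

end Forcing

/-- Closure of `X` in the tree topology. -/
def clTree (X : Set BNode) : Set BNode :=
  X ∪ {t | Order.IsSuccLimit (ht t) ∧ ∀ β < ht t, ∃ s ∈ X, extends' s t ∧ β ≤ ht s}

/-! ### Set-theoretic background: elementary submodels of `(V, ∈)`, properness, BPFA -/

/-- The language with a single binary relation (interpreted below as membership). -/
abbrev memLang : FirstOrder.Language := FirstOrder.Language.order

/-- `ZFSet.{0}` as a structure in the membership language: the unique binary relation
symbol is interpreted as `∈`. -/
instance : memLang.Structure ZFSet.{0} where
  RelMap | .le => fun x => x 0 ∈ x 1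

/-- `R` is (codes) a partial order on the set `P`. -/
def ZIsPoset (P R : ZFSet.{0}) : Prop :=
  (∀ x y : ZFSet.{0}, ZFSet.pair x y ∈ R → x ∈ P ∧ y ∈ P) ∧
  (∀ x ∈ P, ZFSet.pair x x ∈ R) ∧
  (∀ x y z : ZFSet.{0}, ZFSet.pair x y ∈ R → ZFSet.pair y z ∈ R → ZFSet.pair x z ∈ R) ∧
  (∀ x y : ZFSet.{0}, ZFSet.pair x y ∈ R → ZFSet.pair y x ∈ R → x = y)

def ZCompat (P R p q : ZFSet.{0}) : Prop :=
  ∃ r ∈ P, ZFSet.pair r p ∈ R ∧ ZFSet.pair r q ∈ R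

def ZDense (P R D : ZFSet.{0}) : Prop :=
  (∀ x ∈ D, x ∈ P) ∧ ∀ p ∈ P, ∃ q ∈ D, ZFSet.pair q p ∈ R

/-- Properness of the poset `(P, R)`, via countable elementary submodels of the
universe of sets: every condition in such a model has a generic extension. -/
def ZIsProper (P R : ZFSet.{0}) : Prop :=
  ∀ M : memLang.ElementarySubstructure ZFSet.{0}, (M : Set ZFSet.{0}).Countable →
    P ∈ (M : Set ZFSet.{0}) → R ∈ (M : Set ZFSet.{0}) →
    ∀ p ∈ (M : Set ZFSet.{0}), p ∈ P →
      ∃ q ∈ P, ZFSet.pair q p ∈ R ∧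
        ∀ D ∈ (M : Set ZFSet.{0}), ZDense P R D →
          ∀ r ∈ P, ZFSet.pair r q ∈ R → ∃ s ∈ (M : Set ZFSet.{0}), s ∈ D ∧ ZCompat P R s r

/-- The Bounded Proper Forcing Axiom: for every proper poset and `ℵ₁`-many maximal
antichains of size `≤ ℵ₁`, there is a filter meeting them all. -/
def BPFA : Prop :=
  ∀ P R : ZFSet.{0}, ZIsPoset P R → ZIsProper P R →
    ∀ (ι : Type 1) (A : ι → ZFSet.{0}), Cardinal.mk ι ≤ Cardinal.aleph 1 →
      (∀ i, (A i).toSet ⊆ P.toSet ∧ Cardinal.mk (A i).toSet ≤ Cardinal.aleph 1 ∧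
        (∀ a ∈ A i, ∀ b ∈ A i, a ≠ b → ¬ ZCompat P R a b) ∧
        (∀ p ∈ P, ∃ a ∈ A i, ZCompat P R a p)) →
      ∃ G : Set ZFSet.{0}, G ⊆ P.toSet ∧
        (∀ p ∈ G, ∀ q ∈ P.toSet, ZFSet.pair p q ∈ R → q ∈ G) ∧
        (∀ p ∈ G, ∀ q ∈ G, ∃ r ∈ G, ZFSet.pair r p ∈ R ∧ ZFSet.pair r q ∈ R) ∧
        ∀ i, ∃ a, a ∈ A i ∧ a ∈ G

/-! ### The axiom φ, stated for Aronszajn trees of `n`-tuples (the trees used in the paper) -/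

/-- An Aronszajn tree of `n`-tuples (a subtree of the `n`-th power of `2^{<ω₁}`). -/
def TupAronszajn (n : ℕ) (𝒯 : Set (Fin n → BNode)) : Prop :=
  (∀ σ ∈ 𝒯, (∀ i j, ht (σ i) = ht (σ j))) ∧
  (∀ σ ∈ 𝒯, ∀ α, tres σ α ∈ 𝒯) ∧ ¬ 𝒯.Countable ∧
  (∀ α, {σ ∈ 𝒯 | ∀ i, ht (σ i) = α}.Countable) ∧
  (∀ c ⊆ 𝒯, (∀ σ ∈ c, ∀ τ ∈ c, tExt σ τ ∨ tExt τ σ) → c.Countable)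

/-- A subtree of a tuple-tree. -/
def TupSubtree {n : ℕ} (𝒯 A : Set (Fin n → BNode)) : Prop :=
  A ⊆ 𝒯 ∧ (∀ σ ∈ A, ∀ α, tres σ α ∈ A) ∧ ¬ A.Countable

/-- `F^⊥` for a family `F` of subtrees of `𝒯`. -/
def GPerp {n : ℕ} (𝒯 : Set (Fin n → BNode)) (F : Set (Set (Fin n → BNode))) :
    Set (Set (Fin n → BNode)) :=
  {B | TupSubtree 𝒯 B ∧ ∀ A ∈ F, (A ∩ B).Countable}

/-- `φ₀(F)` for a family `F` of subtrees of the tree `𝒯`. -/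
def GPhi0 {n : ℕ} (𝒯 : Set (Fin n → BNode)) (F : Set (Set (Fin n → BNode))) : Prop :=
  ∃ (C : Set Ordinal) (N : Ordinal → Set (Set (Fin n → BNode))),
    IsClubBelow C ∧ (∀ ξ ∈ C, (N ξ).Countable ∧ N ξ ⊆ F ∪ GPerp 𝒯 F) ∧
    (∀ ξ ∈ C, ∀ η ∈ C, ξ ≤ η → N ξ ⊆ N η) ∧
    (∀ ν ∈ C, IsLimitOf C ν → N ν = ⋃ ξ ∈ C ∩ Set.Iio ν, N ξ) ∧
    ∀ ν ∈ C, ∀ σ ∈ 𝒯, (∀ i, ht (σ i) = ν) →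
      (∃ ν₀ < ν, ∀ ξ ∈ C, ν₀ < ξ → ξ < ν → ∃ A ∈ F, A ∈ N ξ ∧ tres σ ξ ∈ A) ∨
      (∃ B ∈ GPerp 𝒯 F, B ∈ N ν ∧ σ ∈ B)

/-- The axiom `φ`: for every Aronszajn (tuple-)tree `𝒯` and every family `F`
of subtrees of `𝒯`, `φ₀(F)` holds. -/
def phiAxiom : Prop :=
  ∀ (n : ℕ) (𝒯 : Set (Fin n → BNode)), TupAronszajn n 𝒯 →
    ∀ F : Set (Set (Fin n → BNode)), (∀ A ∈ F, TupSubtree 𝒯 A) → GPhi0 𝒯 F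

end Basis5
namespace Basis5

lemma ht_eq_of (t : BNode) (a : Ordinal) (h : ∀ ξ, (t.1 ξ).isSome ↔ ξ < a) :
    ht t = a := by
  have hset : {b | ∀ ξ, (t.1 ξ).isSome ↔ ξ < b} = {a} := by
    ext b
    simp only [Set.mem_setOf_eq, Set.mem_singleton_iff]
    constructor
    · intro hb
      refine le_antisymm ?_ ?_
      · by_contra hba
        push_neg at hba
        exact absurd ((h a).mp ((hb a).mpr hba)) (lt_irrefl a)
      · by_contra hab
        push_neg at hab
        exact absurd ((hb b).mp ((h b).mpr hab)) (lt_irrefl b)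
    · rintro rfl; exact h
  rw [ht, hset, csInf_singleton]

lemma isSome_iff_lt_ht (t : BNode) (ξ : Ordinal) : (t.1 ξ).isSome ↔ ξ < ht t := by
  obtain ⟨a, _, hfa⟩ := t.2
  rw [ht_eq_of t a hfa]; exact hfa ξ

lemma ht_restrict_of_le {t : BNode} {ξ : Ordinal} (h : ξ ≤ ht t) :
    ht (restrict t ξ) = ξ := by
  apply ht_eq_of
  intro ζ
  simp only [restrict]
  by_cases hζ : ζ < ξ
  · simp [hζ, (isSome_iff_lt_ht t ζ).mpr (lt_of_lt_of_le hζ h)]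
  · simp [hζ]

lemma diffSet_restrict (s t : BNode) (ξ : Ordinal) :
    diffSet (restrict s ξ) (restrict t ξ) = diffSet s t ∩ Set.Iio ξ := by
  ext ζ
  simp only [diffSet, restrict, Set.mem_setOf_eq, Set.mem_inter_iff, Set.mem_Iio]
  by_cases hζ : ζ < ξ <;> simp [hζ]

/-- if `X ⊆ T^{[n]}` is regular then so is the tree `R_X` it generates. -/
theorem stmt5 (T : Set BNode) (hcoh : Coherent T) (n : ℕ)
    (X : Set (Fin n → BNode)) (hX : ∀ σ ∈ X, IsTup T n σ) (hreg : RegSet X) :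
    RegSet (tDownClosure X) := by
  rintro ρ ⟨σ, hσX, ξ, hξ, rfl⟩ ρ' ⟨τ, hτX, η, hη, rfl⟩ hle h i
  set z : Fin n := ⟨0, h⟩ with hz
  have hσht := (hX σ hσX).2.1
  have hτht := (hX τ hτX).2.1
  have hξη : ξ ≤ η := by
    have := hle z
    rwa [show tres σ ξ z = restrict (σ z) ξ from rfl,
      show tres τ η z = restrict (τ z) η from rfl,
      ht_restrict_of_le (hξ z), ht_restrict_of_le (hη z)] at this
  show diffSet (restrict (τ i) η) (restrict (τ z) η) ∩
      Set.Iio (ht (restrict (σ z) ξ)) = diffSet (restrict (σ i) ξ) (restrict (σ z) ξ)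
  rw [ht_restrict_of_le (hξ z), diffSet_restrict, diffSet_restrict]
  have hIio : Set.Iio η ∩ Set.Iio ξ = Set.Iio ξ := by
    rw [Set.Iio_inter_Iio, min_eq_right hξη]
  rw [Set.inter_assoc, hIio]
  rcases le_total (ht (σ z)) (ht (τ z)) with hc | hc
  · have hp := hreg σ hσX τ hτX
      (fun j => by rw [hσht j z, hτht j z]; exact hc) h i
    calc diffSet (τ i) (τ z) ∩ Set.Iio ξ
        = diffSet (τ i) (τ z) ∩ Set.Iio (ht (σ z)) ∩ Set.Iio ξ := by
          rw [Set.inter_assoc, Set.Iio_inter_Iio, min_eq_right (hξ z)]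
      _ = diffSet (σ i) (σ z) ∩ Set.Iio ξ := by rw [hp]
  · have hp := hreg τ hτX σ hσX
      (fun j => by rw [hσht j z, hτht j z]; exact hc) h i
    have hξτ : ξ ≤ ht (τ z) := le_trans hξη (hη z)
    calc diffSet (τ i) (τ z) ∩ Set.Iio ξ
        = diffSet (σ i) (σ z) ∩ Set.Iio (ht (τ z)) ∩ Set.Iio ξ := by rw [hp]
      _ = diffSet (σ i) (σ z) ∩ Set.Iio ξ := by
          rw [Set.inter_assoc, Set.Iio_inter_Iio, min_eq_right hξτ]
end Basis5
end
end

section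
/- ψ₀(F) implies F is predense: if there is a club E and a continuous chain ⟨N_ν : ν ∈ E⟩ of countable subsets of F such that for every ν ∈ E and t ∈ T_ν there is ν_t < ν with: for all ξ ∈ (ν_t, ν) ∩ E there is A ∈ F ∩ N_ξ containing t ↾ ξ, then F^⊥ = ∅, i.e. every subtree of T has uncountable intersection with some member of F. -/
noncomputable section

namespace Basis5

instance : Nonempty BNode :=
  ⟨⟨fun _ => none, 0, by
    rw [omega1, Cardinal.lt_ord, Ordinal.card_zero]; exact Cardinal.aleph_pos 1,
    by simp⟩⟩

lemma omega1_pos : (0 : Ordinal) < omega1 := by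
  rw [omega1, Cardinal.lt_ord, Ordinal.card_zero]
  exact Cardinal.aleph_pos 1

lemma countable_Iio_omega1 {o : Ordinal.{0}} (h : o < omega1) : (Set.Iio o).Countable := by
  rw [Cardinal.countable_iff_lt_aleph_one, Ordinal.mk_Iio_ordinal]
  rw [omega1, Cardinal.lt_ord] at h
  have := Cardinal.lift_lt.{0, 1}.mpr h
  simpa [Cardinal.lift_aleph] using this

lemma sup_nat_lt (f : ℕ → Ordinal.{0}) (h : ∀ n, f n < omega1) : (⨆ n, f n) < omega1 := by
  apply Ordinal.iSup_lt_ord _ h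
  rw [omega1, Cardinal.isRegular_aleph_one.cof_eq, Cardinal.mk_nat]
  exact Cardinal.aleph0_lt_aleph_one

lemma sup_lt_omega1 {S : Set Ordinal.{0}} (hS : S.Countable) (h : ∀ x ∈ S, x < omega1) :
    ∃ β, β < omega1 ∧ ∀ x ∈ S, x ≤ β := by
  rcases S.eq_empty_or_nonempty with rfl | hne
  · exact ⟨0, omega1_pos, by simp⟩
  · obtain ⟨f, rfl⟩ := hS.exists_eq_range hne
    refine ⟨⨆ n, f n, sup_nat_lt f (fun n => h _ ⟨n, rfl⟩), ?_⟩
    rintro x ⟨n, rfl⟩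
    exact le_ciSup (Ordinal.bddAbove_range f) n

lemma ht_eq_iff {t : BNode} {a : Ordinal} (h : ∀ ξ, (t.1 ξ).isSome ↔ ξ < a) : ht t = a := by
  have hset : {b | ∀ ξ, (t.1 ξ).isSome ↔ ξ < b} = {a} := by
    ext b
    simp only [Set.mem_setOf_eq, Set.mem_singleton_iff]
    constructor
    · intro hb
      have hiff : ∀ ξ, ξ < b ↔ ξ < a := fun ξ => (hb ξ).symm.trans (h ξ)
      exact le_antisymm (le_of_forall_lt fun c hc => (hiff c).mp hc)
        (le_of_forall_lt fun c hc => (hiff c).mpr hc)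
    · rintro rfl; exact h
  rw [ht, hset, csInf_singleton]

lemma ht_spec (t : BNode) : ∀ ξ, (t.1 ξ).isSome ↔ ξ < ht t := by
  obtain ⟨a, ha, hfa⟩ := t.2
  rw [ht_eq_iff hfa]; exact hfa

lemma ht_lt_omega1 (t : BNode) : ht t < omega1 := by
  obtain ⟨a, ha, hfa⟩ := t.2
  rw [ht_eq_iff hfa]; exact ha

lemma ht_restrict (t : BNode) (α : Ordinal) : ht (restrict t α) = min α (ht t) := by
  apply ht_eq_iff
  intro ξ
  show (if ξ < α then t.1 ξ else none).isSome ↔ _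
  by_cases h : ξ < α
  · simp [h, ht_spec t ξ, lt_min_iff]
  · simp [h, lt_min_iff]

lemma exists_ht_eq {T B : Set BNode} (hT : IsAronszajn T) (hB : IsSubtree T B) :
    ∀ ν, ν < omega1 → ∃ t ∈ B, ht t = ν := by
  intro ν hν
  have hmain : ∃ t ∈ B, ν ≤ ht t := by
    by_contra hcon
    push_neg at hcon
    have hcnt : B.Countable := by
      have hsub : B ⊆ ⋃ α ∈ Set.Iio ν, {t | t ∈ T ∧ ht t = α} := by
        intro t ht'
        exact Set.mem_biUnion (hcon t ht') ⟨hB.1 ht', rfl⟩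
      exact Set.Countable.mono hsub
        ((countable_Iio_omega1 hν).biUnion fun α _ => hT.2.2.1 α)
    exact hB.2.2 hcnt
  obtain ⟨t, htB, hle⟩ := hmain
  exact ⟨restrict t ν, hB.2.1 t htB ν, by rw [ht_restrict]; exact min_eq_left hle⟩

lemma exists_closure_point {E : Set Ordinal} (hE : IsClubBelow E) (b : Ordinal → Ordinal)
    (hb : ∀ η, η < omega1 → b η < omega1) {α : Ordinal} (hα : α < omega1) :
    ∃ ν ∈ E, α < ν ∧ IsLimitOf E ν ∧ ∀ η < ν, b η < ν := by
  have step : ∀ x, x < omega1 → ∃ y, y ∈ E ∧ x < y ∧ y < omega1 ∧ ∀ η < x, b η < y := by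
    intro x hx
    obtain ⟨β, hβ, hβb⟩ := sup_lt_omega1 ((countable_Iio_omega1 hx).image b) (by
      rintro _ ⟨η, hη, rfl⟩; exact hb η (lt_trans hη hx))
    obtain ⟨y, hyE, hy⟩ := hE.2.1 (max x β) (max_lt hx hβ)
    refine ⟨y, hyE, lt_of_le_of_lt (le_max_left x β) hy, Set.mem_Iio.mp (hE.1 hyE), ?_⟩
    intro η hη
    exact lt_of_le_of_lt (le_trans (hβb _ ⟨η, hη, rfl⟩) (le_max_right x β)) hy
  let g : ℕ → {x : Ordinal // x ∈ E ∧ x < omega1} := fun n =>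
    Nat.rec ⟨(step α hα).choose, (step α hα).choose_spec.1, (step α hα).choose_spec.2.2.1⟩
      (fun _ p => ⟨(step p.1 p.2.2).choose, (step p.1 p.2.2).choose_spec.1,
        (step p.1 p.2.2).choose_spec.2.2.1⟩) n
  have hgsucc : ∀ n : ℕ, (g n).1 < (g (n+1)).1 ∧ ∀ η < (g n).1, b η < (g (n+1)).1 := by
    intro n
    exact ⟨(step (g n).1 (g n).2.2).choose_spec.2.1,
      fun η hη => (step (g n).1 (g n).2.2).choose_spec.2.2.2 η hη⟩
  have hαg : α < (g 0).1 := (step α hα).choose_spec.2.1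
  set ν : Ordinal := ⨆ n, (g n).1 with hνdef
  have hbdd : BddAbove (Set.range fun n => (g n).1) := Ordinal.bddAbove_range _
  have hν1 : ν < omega1 := sup_nat_lt _ (fun n => (g n).2.2)
  have hleν : ∀ n, (g n).1 ≤ ν := fun n => le_ciSup hbdd n
  have hltν : ∀ n, (g n).1 < ν := fun n => lt_of_lt_of_le (hgsucc n).1 (hleν (n+1))
  have hne : (E ∩ Set.Iio ν).Nonempty := ⟨(g 0).1, (g 0).2.1, hltν 0⟩
  have hbdd2 : BddAbove (E ∩ Set.Iio ν) := ⟨ν, fun x hx => le_of_lt hx.2⟩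
  have hsup : sSup (E ∩ Set.Iio ν) = ν := by
    refine le_antisymm (csSup_le hne fun x hx => le_of_lt hx.2) ?_
    refine ciSup_le fun n => le_csSup hbdd2 ⟨(g n).2.1, hltν n⟩
  have hlim : IsLimitOf E ν := ⟨hne, hsup⟩
  refine ⟨ν, hE.2.2 ν hν1 hne hsup, lt_of_lt_of_le hαg (hleν 0), hlim, ?_⟩
  intro η hη
  obtain ⟨n, hn⟩ := (lt_ciSup_iff hbdd).mp hη
  exact lt_of_lt_of_le ((hgsucc n).2 η hn) (hleν (n+1))

lemma fodor_lite {E : Set Ordinal} (hE : IsClubBelow E) {α₀ : Ordinal} (hα₀ : α₀ < omega1)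
    (f : Ordinal → Ordinal) (hf : ∀ ν, ν ∈ E → IsLimitOf E ν → α₀ < ν → f ν < ν) :
    ∃ η, η < omega1 ∧ ∀ β, β < omega1 →
      ∃ ν, ν ∈ E ∧ IsLimitOf E ν ∧ α₀ < ν ∧ β < ν ∧ f ν ≤ η := by
  classical
  by_contra hcon
  push_neg at hcon
  set b : Ordinal → Ordinal := fun η => if h : η < omega1 then (hcon η h).choose else 0 with hbdef
  have hb : ∀ η, η < omega1 → b η < omega1 := by
    intro η h
    simp only [hbdef, dif_pos h]
    exact (hcon η h).choose_spec.1
  obtain ⟨ν, hνE, hαν, hνlim, hcl⟩ := exists_closure_point hE b hb hα₀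
  have hfν := hf ν hνE hνlim hαν
  have hfν1 : f ν < omega1 := lt_trans hfν (Set.mem_Iio.mp (hE.1 hνE))
  have hbν : (hcon (f ν) hfν1).choose < ν := by
    have := hcl _ hfν
    simpa only [hbdef, dif_pos hfν1] using this
  have := (hcon (f ν) hfν1).choose_spec.2 ν hνE hνlim hαν hbν
  exact lt_irrefl _ this

end Basis5

namespace Basis5
/-- `ψ₀(F)` implies that `F` is predense, i.e. every subtree of `T`
has uncountable intersection with some member of `F`. -/
theorem stmt18 (T : Set BNode) (hT : IsAronszajn T) (F : Set (Set BNode))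
    (hF : ∀ A ∈ F, IsSubtree T A)
    (E : Set Ordinal) (N : Ordinal → Set (Set BNode))
    (hE : IsClubBelow E) (hcnt : ∀ ν ∈ E, (N ν).Countable ∧ N ν ⊆ F)
    (hmono : ∀ ξ ∈ E, ∀ η ∈ E, ξ ≤ η → N ξ ⊆ N η)
    (hcont : ∀ ν ∈ E, IsLimitOf E ν → N ν = ⋃ ξ ∈ E ∩ Set.Iio ν, N ξ)
    (hdich : ∀ ν ∈ E, ∀ t ∈ T, ht t = ν →
      ∃ ν₀ < ν, ∀ ξ ∈ E, ν₀ < ξ → ξ < ν →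
        ∃ A ∈ F, A ∈ N ξ ∧ restrict t ξ ∈ A) :
    ∀ B, IsSubtree T B → ∃ A ∈ F, ¬ (A ∩ B).Countable := by
  intro B hB
  classical
  by_contra hcon
  push_neg at hcon
  have hgA : ∀ A, A ∈ F → ∃ γ, γ < omega1 ∧ ∀ x ∈ A ∩ B, ht x ≤ γ := by
    intro A hA
    obtain ⟨γ, hγ, hγb⟩ := sup_lt_omega1 ((hcon A hA).image ht)
      (by rintro _ ⟨x, _, rfl⟩; exact ht_lt_omega1 x)
    exact ⟨γ, hγ, fun x hx => hγb _ ⟨x, hx, rfl⟩⟩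
  choose! gA hgA1 hgA2 using hgA
  have key : ∀ ν, ν ∈ E → ∃ p, p < ν ∧ ∃ t, t ∈ B ∧ ht t = ν ∧
      ∀ ξ, ξ ∈ E → p < ξ → ξ < ν → ∃ A, A ∈ F ∧ A ∈ N ξ ∧ restrict t ξ ∈ A := by
    intro ν hν
    obtain ⟨t, htB, htν⟩ := exists_ht_eq hT hB ν (Set.mem_Iio.mp (hE.1 hν))
    obtain ⟨p, hp, hps⟩ := hdich ν hν t (hB.1 htB) htν
    refine ⟨p, hp, t, htB, htν, fun ξ h1 h2 h3 => ?_⟩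
    obtain ⟨A, hA1, hA2, hA3⟩ := hps ξ h1 h2 h3
    exact ⟨A, hA1, hA2, hA3⟩
  choose! pf hpf tf htfB htfht htfs using key
  obtain ⟨η₀, hη₀, hU⟩ := fodor_lite hE omega1_pos pf (fun ν hν _ _ => hpf ν hν)
  have key2 : ∀ ξ, ξ ∈ E → η₀ < ξ →
      ∃ A, A ∈ F ∧ A ∈ N ξ ∧ ∃ s, s ∈ A ∧ s ∈ B ∧ ht s = ξ := by
    intro ξ hξ hηξ
    obtain ⟨ν, hνE, hνlim, _, hξν, hpν⟩ := hU ξ (Set.mem_Iio.mp (hE.1 hξ))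
    obtain ⟨A, hA1, hA2, hA3⟩ := htfs ν hνE ξ hξ (lt_of_le_of_lt hpν hηξ) hξν
    refine ⟨A, hA1, hA2, restrict (tf ν) ξ, hA3, hB.2.1 _ (htfB ν hνE) ξ, ?_⟩
    rw [ht_restrict, htfht ν hνE]
    exact min_eq_left (le_of_lt hξν)
  choose! Af hAfF hAfN sf hsfA hsfB hsfht using key2
  have key3 : ∀ ξ, ξ ∈ E → IsLimitOf E ξ → η₀ < ξ → ∃ ρ, ρ ∈ E ∧ ρ < ξ ∧ Af ξ ∈ N ρ := by
    intro ξ hξ hlim hηξ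
    have hmem : Af ξ ∈ N ξ := hAfN ξ hξ hηξ
    rw [hcont ξ hξ hlim] at hmem
    simp only [Set.mem_iUnion] at hmem
    obtain ⟨ρ, hρ, hmem⟩ := hmem
    exact ⟨ρ, hρ.1, hρ.2, hmem⟩
  choose! rf hrfE hrflt hrfmem using key3
  obtain ⟨ρ₀, hρ₀, hV⟩ := fodor_lite hE hη₀ rf (fun ξ h1 h2 h3 => hrflt ξ h1 h2 h3)
  obtain ⟨ρ₁, hρ₁E, hρρ₁⟩ := hE.2.1 ρ₀ hρ₀
  have hAfmem : ∀ ξ, ξ ∈ E → IsLimitOf E ξ → η₀ < ξ → rf ξ ≤ ρ₀ → Af ξ ∈ N ρ₁ := by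
    intro ξ h1 h2 h3 h4
    exact hmono (rf ξ) (hrfE ξ h1 h2 h3) ρ₁ hρ₁E (le_of_lt (lt_of_le_of_lt h4 hρρ₁))
      (hrfmem ξ h1 h2 h3)
  have pigeon : ∃ A, A ∈ N ρ₁ ∧ ∀ β, β < omega1 → ∃ ξ, ξ ∈ E ∧ IsLimitOf E ξ ∧ η₀ < ξ ∧
      rf ξ ≤ ρ₀ ∧ β < ξ ∧ Af ξ = A := by
    by_contra hpig
    push_neg at hpig
    set bb : Set BNode → Ordinal := fun A => if h : A ∈ N ρ₁ then (hpig A h).choose else 0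
      with hbbdef
    obtain ⟨β₁, hβ₁, hβ₁b⟩ := sup_lt_omega1 ((hcnt ρ₁ hρ₁E).1.image bb) (by
      rintro _ ⟨A, hA, rfl⟩
      simp only [hbbdef, dif_pos hA]
      exact (hpig A hA).choose_spec.1)
    obtain ⟨ξ, h1, h2, h3, h4, h5⟩ := hV β₁ hβ₁
    have hmem := hAfmem ξ h1 h2 h3 h5
    have hbble : bb (Af ξ) ≤ β₁ := hβ₁b _ ⟨Af ξ, hmem, rfl⟩
    have hchle : (hpig (Af ξ) hmem).choose < ξ := by
      have : bb (Af ξ) < ξ := lt_of_le_of_lt hbble h4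
      simpa only [hbbdef, dif_pos hmem] using this
    exact (hpig (Af ξ) hmem).choose_spec.2 ξ h1 h2 h3 h5 hchle rfl
  obtain ⟨A, hAN, hAub⟩ := pigeon
  obtain ⟨ξ₀, k1, k2, k3, k4, k5, k6⟩ := hAub 0 omega1_pos
  have hAF : A ∈ F := k6 ▸ hAfF ξ₀ k1 k3
  obtain ⟨ξ, h1, h2, h3, h4, h5, h6⟩ := hAub (gA A) (hgA1 A hAF)
  have hs : ht (sf ξ) = ξ := hsfht ξ h1 h3
  have hsA : sf ξ ∈ A := h6 ▸ hsfA ξ h1 h3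
  have hsB : sf ξ ∈ B := hsfB ξ h1 h3
  have hle : ξ ≤ gA A := hs ▸ hgA2 A hAF (sf ξ) ⟨hsA, hsB⟩
  exact absurd hle (not_le.mpr h5)
end Basis5
end
end
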